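/- arXiv:2306.03051 — 3 statements merged into one kernel-verified Lean document; each statement's English description precedes it below -/
import Mathlib

section
/- Let α₁, α₂ be non-commuting trace-zero integral elements of a quaternion algebra B over ℚ with Nrd(α₁) = p·d·d₁² and Nrd(α₂) = p·d·d₂², and suppose Trd(α₁α₂) = -p·t for an integer t (so that ρ = -α₁α₂/p has integer trace t). Then the discriminant of the order Λ = ℤ + ℤα₁ + ℤα₂ + ℤα₁α₂ equals p⁴·(t² − 4dd₁²d₂²)², i.e., the determinant of the Gram matrix of the basis (1, α₁, α₂, α₁α₂) under the trace pairing ⟨x,y⟩ = Trd(x·ȳ) is p⁴·(Trd(ρ)² − 4·Nrd(ρ))². -/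
open Quaternion

noncomputable section

theorem my_det_fin_four {R : Type*} [CommRing R] (A : Matrix (Fin 4) (Fin 4) R) :
    A.det =
      A 0 0*A 1 1*A 2 2*A 3 3
      - A 0 0*A 1 1*A 2 3*A 3 2
      - A 0 0*A 1 2*A 2 1*A 3 3
      + A 0 0*A 1 2*A 2 3*A 3 1
      + A 0 0*A 1 3*A 2 1*A 3 2
      - A 0 0*A 1 3*A 2 2*A 3 1
      - A 0 1*A 1 0*A 2 2*A 3 3
      + A 0 1*A 1 0*A 2 3*A 3 2
      + A 0 1*A 1 2*A 2 0*A 3 3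
      - A 0 1*A 1 2*A 2 3*A 3 0
      - A 0 1*A 1 3*A 2 0*A 3 2
      + A 0 1*A 1 3*A 2 2*A 3 0
      + A 0 2*A 1 0*A 2 1*A 3 3
      - A 0 2*A 1 0*A 2 3*A 3 1
      - A 0 2*A 1 1*A 2 0*A 3 3
      + A 0 2*A 1 1*A 2 3*A 3 0
      + A 0 2*A 1 3*A 2 0*A 3 1
      - A 0 2*A 1 3*A 2 1*A 3 0
      - A 0 3*A 1 0*A 2 1*A 3 2
      + A 0 3*A 1 0*A 2 2*A 3 1
      + A 0 3*A 1 1*A 2 0*A 3 2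
      - A 0 3*A 1 1*A 2 2*A 3 0
      - A 0 3*A 1 2*A 2 0*A 3 1
      + A 0 3*A 1 2*A 2 1*A 3 0 := by
  have h2 : (Fin.castSucc (2 : Fin 3) : Fin 4) = 2 := rfl
  rw [Matrix.det_succ_row_zero]
  simp [Fin.sum_univ_succ, Matrix.det_fin_three, Matrix.submatrix_apply, Fin.succAbove,
    Fin.succ, h2]
  ring


/-- The reduced trace of a quaternion. -/
def Trd {a b : ℚ} (x : ℍ[ℚ,a,b]) : ℚ := x.re + (star x).re

/-- The reduced norm of a quaternion. -/
def Nrd {a b : ℚ} (x : ℍ[ℚ,a,b]) : ℚ := (x * star x).re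

/-- Let `α₁, α₂` be non-commuting trace-zero integral elements of a
quaternion algebra over `ℚ` with `Nrd(α₁) = p·d·d₁²`, `Nrd(α₂) = p·d·d₂²` and
`Trd(α₁α₂) = -p·t` (so `ρ = -α₁α₂/p` has trace `t` and norm `d²d₁²d₂²`). Then the
determinant of the Gram matrix of the basis `(1, α₁, α₂, α₁α₂)` under the trace
pairing — i.e. the discriminant of `Λ = ℤ + ℤα₁ + ℤα₂ + ℤα₁α₂` — equals
`p⁴·(t² − 4d²d₁²d₂²)² = p⁴·(Trd(ρ)² − 4·Nrd(ρ))²`. -/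
theorem gram_det_of_inseparable_pair {a b : ℚ} (ha : a ≠ 0) (hb : b ≠ 0)
    (p : ℕ) (hp : p.Prime) (d d₁ d₂ t : ℤ)
    (α₁ α₂ : ℍ[ℚ,a,b])
    (ht₁ : Trd α₁ = 0) (ht₂ : Trd α₂ = 0)
    (hn₁ : Nrd α₁ = ((p : ℤ) * d * d₁ ^ 2 : ℤ))
    (hn₂ : Nrd α₂ = ((p : ℤ) * d * d₂ ^ 2 : ℤ))
    (hcomm : α₁ * α₂ ≠ α₂ * α₁)
    (htr : Trd (α₁ * α₂) = ((-(p : ℤ) * t : ℤ) : ℚ)) :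
    Matrix.det (Matrix.of fun i j : Fin 4 =>
        Trd ((![1, α₁, α₂, α₁ * α₂] i) * star (![1, α₁, α₂, α₁ * α₂] j)))
      = ((p : ℚ)) ^ 4 * (((t : ℚ)) ^ 2 - 4 * ((d : ℚ)) ^ 2 * ((d₁ : ℚ)) ^ 2 * ((d₂ : ℚ)) ^ 2) ^ 2 := by
  have h1 : α₁.re = 0 := by
    have := ht₁; simp [Trd] at this; linarith
  have h2 : α₂.re = 0 := by
    have := ht₂; simp [Trd] at this; linarith
  have key : Matrix.det (Matrix.of fun i j : Fin 4 =>
        Trd ((![1, α₁, α₂, α₁ * α₂] i) * star (![1, α₁, α₂, α₁ * α₂] j)))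
      = (4 * Nrd α₁ * Nrd α₂ - (Trd (α₁ * α₂)) ^ 2) ^ 2 := by
    rw [my_det_fin_four]
    simp only [Matrix.of_apply, Matrix.cons_val_zero, Matrix.cons_val_one, Matrix.head_cons,
      Matrix.cons_val_two, Matrix.cons_val_three, Matrix.tail_cons, Matrix.head_fin_const]
    simp only [Trd, Nrd, QuaternionAlgebra.re_mul, QuaternionAlgebra.re_star,
      QuaternionAlgebra.imI_star, QuaternionAlgebra.imJ_star, QuaternionAlgebra.imK_star,
      QuaternionAlgebra.imI_mul, QuaternionAlgebra.imJ_mul, QuaternionAlgebra.imK_mul,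
      QuaternionAlgebra.re_one, QuaternionAlgebra.imI_one, QuaternionAlgebra.imJ_one,
      QuaternionAlgebra.imK_one, h1, h2]
    ring
  rw [key, hn₁, hn₂, htr]
  push_cast
  ring

end
end

section
/- Let p be an odd prime and B a quaternion algebra over ℚ ramified at p. If 𝒪 ⊆ B is a ℤ-order that is p-saturated, then 𝒪 is p-maximal (i.e., 𝒪 ⊗ ℤ_p is a maximal order in B ⊗ ℚ_p). -/
open Quaternion

noncomputable section

variable {p : ℕ} [Fact p.Prime]

/-- The reduced trace of a quaternion over `ℚ_p`. -/
def TrdP {a b : ℚ_[p]} (x : ℍ[ℚ_[p],a,b]) : ℚ_[p] := x.re + (star x).re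

/-- The reduced norm of a quaternion over `ℚ_p`. -/
def NrdP {a b : ℚ_[p]} (x : ℍ[ℚ_[p],a,b]) : ℚ_[p] := (x * star x).re

/-- The natural coefficientwise map `H(a,b)/ℚ → H(a,b)/ℚ_p`, realizing `B ⊗ ℚ_p`. -/
def localize (p : ℕ) [Fact p.Prime] {a b : ℚ} (x : ℍ[ℚ,a,b]) :
    ℍ[ℚ_[p], (a : ℚ_[p]), (b : ℚ_[p])] :=
  ⟨(x.re : ℚ_[p]), (x.imI : ℚ_[p]), (x.imJ : ℚ_[p]), (x.imK : ℚ_[p])⟩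

/-- A `ℤ`-order in `H(a,b)/ℚ`. -/
def IsOrder {a b : ℚ} (O : Submodule ℤ ℍ[ℚ,a,b]) : Prop :=
  (O.FG ∧ Submodule.span ℚ (O : Set ℍ[ℚ,a,b]) = ⊤) ∧
    (1 : ℍ[ℚ,a,b]) ∈ O ∧ ∀ x ∈ O, ∀ y ∈ O, x * y ∈ O

/-- A `ℤ_p`-order in `H(a,b)/ℚ_p`. -/
def IsOrderP {a b : ℚ_[p]} (O : Submodule ℤ_[p] ℍ[ℚ_[p],a,b]) : Prop :=
  (O.FG ∧ Submodule.span ℚ_[p] (O : Set ℍ[ℚ_[p],a,b]) = ⊤) ∧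
    (1 : ℍ[ℚ_[p],a,b]) ∈ O ∧ ∀ x ∈ O, ∀ y ∈ O, x * y ∈ O

/-- The completion `𝒪_p = 𝒪 ⊗ ℤ_p` of an order, realized as the `ℤ_p`-span of its
image in `H(a,b)/ℚ_p`. -/
def localOrder (p : ℕ) [Fact p.Prime] {a b : ℚ} (O : Submodule ℤ ℍ[ℚ,a,b]) :
    Submodule ℤ_[p] ℍ[ℚ_[p], (a : ℚ_[p]), (b : ℚ_[p])] :=
  Submodule.span ℤ_[p] (localize p '' (O : Set ℍ[ℚ,a,b]))

/-- `𝒪` is `p`-saturated: `𝒪_p` has a `ℤ_p`-basis that diagonalizes the reduced norm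
form, with each basis vector of norm of `p`-adic valuation at most `1`. -/
def IsPSaturated (p : ℕ) [Fact p.Prime] {a b : ℚ} (O : Submodule ℤ ℍ[ℚ,a,b]) : Prop :=
  ∃ x : Fin 4 → ℍ[ℚ_[p], (a : ℚ_[p]), (b : ℚ_[p])],
    Submodule.span ℤ_[p] (Set.range x) = localOrder p O ∧
    LinearIndependent ℤ_[p] x ∧
    (∀ i j, i ≠ j → TrdP (x i * star (x j)) = 0) ∧
    ∀ i, (NrdP (x i)).valuation ≤ 1

/-- `𝒪` is `p`-maximal: `𝒪_p = 𝒪 ⊗ ℤ_p` is a maximal `ℤ_p`-order in `B ⊗ ℚ_p`. -/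
def IsPMaximal (p : ℕ) [Fact p.Prime] {a b : ℚ} (O : Submodule ℤ ℍ[ℚ,a,b]) : Prop :=
  IsOrderP (localOrder p O) ∧
    ∀ O' : Submodule ℤ_[p] ℍ[ℚ_[p], (a : ℚ_[p]), (b : ℚ_[p])],
      IsOrderP O' → localOrder p O ≤ O' → O' = localOrder p O

namespace PSatAux

variable {a b : ℚ_[p]}

lemma TrdP_eq (x : ℍ[ℚ_[p],a,b]) : TrdP x = 2 * x.re := by
  simp [TrdP]; ring

lemma NrdP_eq (x : ℍ[ℚ_[p],a,b]) :
    NrdP x = x.re*x.re - a*x.imI*x.imI - b*x.imJ*x.imJ + a*b*x.imK*x.imK := by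
  simp [NrdP, QuaternionAlgebra.re_mul]; ring

lemma mul_star_eq (x : ℍ[ℚ_[p],a,b]) : x * star x = (NrdP x : ℚ_[p]) • 1 := by
  ext <;> simp [NrdP_eq, QuaternionAlgebra.re_mul, QuaternionAlgebra.imI_mul,
    QuaternionAlgebra.imJ_mul, QuaternionAlgebra.imK_mul] <;> ring

lemma quad_identity (x : ℍ[ℚ_[p],a,b]) :
    x * x - (TrdP x) • x + (NrdP x) • 1 = 0 := by
  ext <;> simp [TrdP_eq, NrdP_eq, QuaternionAlgebra.re_mul, QuaternionAlgebra.imI_mul,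
    QuaternionAlgebra.imJ_mul, QuaternionAlgebra.imK_mul] <;> ring

lemma NrdP_one : NrdP (1 : ℍ[ℚ_[p],a,b]) = 1 := by simp [NrdP_eq]

lemma NrdP_zero : NrdP (0 : ℍ[ℚ_[p],a,b]) = 0 := by simp [NrdP_eq]

lemma NrdP_star (x : ℍ[ℚ_[p],a,b]) : NrdP (star x) = NrdP x := by
  simp [NrdP_eq]
  try ring

lemma NrdP_smul (c : ℚ_[p]) (x : ℍ[ℚ_[p],a,b]) : NrdP (c • x) = c * c * NrdP x := by
  simp [NrdP_eq]
  try ring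

lemma NrdP_mul (x y : ℍ[ℚ_[p],a,b]) : NrdP (x * y) = NrdP x * NrdP y := by
  have h : (x*y) * star (x*y) = (NrdP x * NrdP y) • (1:ℍ[ℚ_[p],a,b]) := by
    rw [star_mul, show x*y*(star y * star x) = x*(y*star y)*star x by
        rw [mul_assoc, mul_assoc, mul_assoc], mul_star_eq y, mul_smul_comm, smul_mul_assoc,
      mul_one, mul_star_eq x, smul_smul, mul_comm]
  have := congrArg QuaternionAlgebra.re h
  simpa [NrdP, QuaternionAlgebra.re_smul] using this

/-- The reduced trace as a linear map. -/
def TrdL : ℍ[ℚ_[p],a,b] →ₗ[ℚ_[p]] ℚ_[p] where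
  toFun := TrdP
  map_add' x y := by simp [TrdP_eq]; ring
  map_smul' c x := by simp [TrdP_eq]; ring

lemma TrdL_apply (x : ℍ[ℚ_[p],a,b]) : TrdL x = TrdP x := rfl

lemma two_norm (hodd : p ≠ 2) : ‖(2:ℚ_[p])‖ = 1 := by
  have h1 : ‖(2:ℚ_[p])‖ ≤ 1 := by
    simpa using Padic.norm_int_le_one (p := p) 2
  have h2 : ¬ ‖(2:ℚ_[p])‖ < 1 := by
    rw [show ((2:ℚ_[p])) = ((2:ℤ):ℚ_[p]) by norm_num, Padic.norm_intCast_lt_one_iff]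
    intro hdvd
    have hp2 : p ∣ 2 := by exact_mod_cast hdvd
    exact hodd ((Nat.prime_dvd_prime_iff_eq (Fact.out) Nat.prime_two).mp hp2)
  linarith [lt_or_eq_of_le h1]

/-- Discreteness of the `p`-adic norm. -/
lemma norm_le_inv_of_lt_one {q : ℚ_[p]} (h : ‖q‖ < 1) : ‖q‖ ≤ (p:ℝ)⁻¹ := by
  rcases eq_or_ne q 0 with rfl | hq
  · simp
  · rw [Padic.norm_eq_zpow_neg_valuation hq] at h ⊢
    have hp1 : (1:ℝ) < (p:ℝ) := by exact_mod_cast (Fact.out : p.Prime).one_lt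
    have : -q.valuation < 0 := by
      by_contra hcon
      push_neg at hcon
      exact absurd (one_le_zpow₀ (le_of_lt hp1) hcon) (not_le.mpr h)
    have : -q.valuation ≤ -1 := by omega
    calc (p:ℝ) ^ (-q.valuation) ≤ (p:ℝ) ^ (-1:ℤ) :=
          zpow_le_zpow_right₀ (le_of_lt hp1) this
      _ = (p:ℝ)⁻¹ := by simp

lemma quad_root (t n : ℚ_[p]) (h : ‖n‖ < ‖t‖^2) : ∃ r : ℚ_[p], r*r - t*r + n = 0 := by
  have ht : t ≠ 0 := by
    rintro rfl; simp at h; exact absurd h (by simp)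
  have ht' : ‖t‖ ≠ 0 := norm_ne_zero_iff.mpr ht
  set m : ℚ_[p] := n / (t*t) with hm
  have hmn : ‖m‖ < 1 := by
    rw [hm, norm_div, norm_mul, div_lt_one (by positivity)]
    calc ‖n‖ < ‖t‖^2 := h
    _ = ‖t‖ * ‖t‖ := sq ‖t‖
  set M : ℤ_[p] := ⟨m, le_of_lt hmn⟩ with hM
  set F : Polynomial ℤ_[p] := Polynomial.X^2 - Polynomial.X + Polynomial.C M with hF
  have hd : F.derivative = 2 * Polynomial.X - 1 := by
    simp [hF]
    ring_nf
  have hnorm : ‖F.eval 0‖ < ‖F.derivative.eval 0‖^2 := by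
    rw [hd]
    simp [hF]
    exact hmn
  obtain ⟨z, hz, -⟩ := hensels_lemma hnorm
  refine ⟨t * (z : ℚ_[p]), ?_⟩
  have hz' : (z:ℚ_[p])*(z:ℚ_[p]) - (z:ℚ_[p]) + m = 0 := by
    have hz2 : z*z - z + M = 0 := by rw [hF] at hz; simpa [sq] using hz
    have := congrArg (fun x : ℤ_[p] => (x : ℚ_[p])) hz2
    push_cast at this
    simpa [hM] using this
  have : t*(z:ℚ_[p]) * (t*(z:ℚ_[p])) - t*(t*(z:ℚ_[p])) + n
      = (t*t) * ((z:ℚ_[p])*(z:ℚ_[p]) - (z:ℚ_[p]) + m) := by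
    have htm : (t*t) * m = n := by rw [hm]; field_simp
    linear_combination -htm
  rw [this, hz', mul_zero]

section Division

variable (hodd : p ≠ 2)
variable (hram : ∀ x : ℍ[ℚ_[p],a,b], x ≠ 0 → IsUnit x)

include hram in
lemma NrdP_ne_zero {x : ℍ[ℚ_[p],a,b]} (hx : x ≠ 0) : NrdP x ≠ 0 := by
  intro h
  have h0 : x * star x = 0 := by rw [mul_star_eq, h, zero_smul]
  have := ((hram x hx).mul_right_eq_zero).mp h0
  apply hx
  simpa using congrArg star this

include hodd hram in
/-- KEY: in a division quaternion algebra over `ℚ_p`, `‖Trd x‖² ≤ ‖Nrd x‖`. -/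
lemma key (x : ℍ[ℚ_[p],a,b]) : ‖TrdP x‖^2 ≤ ‖NrdP x‖ := by
  by_contra hcon
  push_neg at hcon
  obtain ⟨r, hr⟩ := quad_root (TrdP x) (NrdP x) hcon
  -- factor the quadratic identity
  have hfac : (x - r • 1) * (x - (TrdP x - r) • 1) = 0 := by
    have hn : r * (TrdP x - r) = NrdP x := by linear_combination -hr
    have expand : (x - r • 1) * (x - (TrdP x - r) • 1)
        = x*x - TrdP x • x + (r * (TrdP x - r)) • 1 := by
      simp only [mul_sub, sub_mul, smul_mul_assoc, mul_smul_comm, one_mul, mul_one, smul_smul]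
      module
    rw [expand, hn, quad_identity]
  have hscalar : ∃ c : ℚ_[p], x = c • 1 := by
    rcases eq_or_ne (x - r • 1) 0 with h1 | h1
    · exact ⟨r, by linear_combination (norm := module) h1⟩
    · have h2 := ((hram _ h1).mul_right_eq_zero).mp hfac
      exact ⟨TrdP x - r, by linear_combination (norm := module) h2⟩
  obtain ⟨c, rfl⟩ := hscalar
  have ht : TrdP (c • (1:ℍ[ℚ_[p],a,b])) = 2 * c := by
    simp [TrdP_eq]
  have hn2 : NrdP (c • (1:ℍ[ℚ_[p],a,b])) = c * c := by
    rw [NrdP_smul, NrdP_one, mul_one]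
  rw [ht, hn2] at hcon
  rw [norm_mul (2:ℚ_[p]) c, two_norm hodd, one_mul, norm_mul, sq] at hcon
  exact lt_irrefl _ hcon

include hodd hram in
lemma norm_NrdP_one_add (x : ℍ[ℚ_[p],a,b]) (hx : ‖NrdP x‖ ≤ 1) : ‖NrdP (1 + x)‖ ≤ 1 := by
  have hid : NrdP (1 + x) = 1 + TrdP x + NrdP x := by
    simp [NrdP_eq, TrdP_eq]
    ring
  have ht : ‖TrdP x‖ ≤ 1 := by
    have := le_trans (key hodd hram x) hx
    nlinarith [norm_nonneg (TrdP x)]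
  rw [hid]
  calc ‖1 + TrdP x + NrdP x‖ ≤ max ‖1 + TrdP x‖ ‖NrdP x‖ := Padic.nonarchimedean _ _
    _ ≤ max (max ‖(1:ℚ_[p])‖ ‖TrdP x‖) ‖NrdP x‖ :=
        max_le_max (Padic.nonarchimedean _ _) le_rfl
    _ ≤ 1 := by
        simp only [norm_one]
        exact max_le (max_le le_rfl ht) hx

include hodd hram in
lemma norm_NrdP_add_aux {x y : ℍ[ℚ_[p],a,b]} (hy : y ≠ 0) (hle : ‖NrdP x‖ ≤ ‖NrdP y‖) :
    ‖NrdP (x + y)‖ ≤ ‖NrdP y‖ := by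
  set u := (hram y hy).unit with hu
  have huy : (u : ℍ[ℚ_[p],a,b]) = y := rfl
  have hinv : NrdP ((u⁻¹ : _ˣ) : ℍ[ℚ_[p],a,b]) * NrdP y = 1 := by
    rw [← NrdP_mul, ← huy, Units.inv_mul, NrdP_one]
  have hNy : NrdP y ≠ 0 := NrdP_ne_zero hram hy
  have hdecomp : x + y = (1 + x * ((u⁻¹ : _ˣ) : ℍ[ℚ_[p],a,b])) * y := by
    rw [add_mul, one_mul, mul_assoc, ← huy, Units.inv_mul, mul_one, add_comm]
  have hsmall : ‖NrdP (x * ((u⁻¹ : _ˣ) : ℍ[ℚ_[p],a,b]))‖ ≤ 1 := by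
    rw [NrdP_mul, norm_mul]
    have : ‖NrdP ((u⁻¹ : _ˣ) : ℍ[ℚ_[p],a,b])‖ = ‖NrdP y‖⁻¹ := by
      have h' := congrArg (fun t => ‖t‖) hinv
      simp only [norm_mul, norm_one] at h'
      have hNy' : ‖NrdP y‖ ≠ 0 := norm_ne_zero_iff.mpr hNy
      field_simp at h' ⊢
      linarith [h']
    rw [this]
    rw [mul_inv_le_iff₀ (norm_pos_iff.mpr hNy), one_mul]
    exact hle
  calc ‖NrdP (x + y)‖ = ‖NrdP (1 + x * ((u⁻¹ : _ˣ) : ℍ[ℚ_[p],a,b]))‖ * ‖NrdP y‖ := by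
        rw [hdecomp, NrdP_mul, norm_mul]
    _ ≤ 1 * ‖NrdP y‖ := by
        have := norm_NrdP_one_add hodd hram _ hsmall
        exact mul_le_mul_of_nonneg_right this (norm_nonneg _)
    _ = ‖NrdP y‖ := one_mul _

include hodd hram in
lemma norm_NrdP_add (x y : ℍ[ℚ_[p],a,b]) :
    ‖NrdP (x + y)‖ ≤ max ‖NrdP x‖ ‖NrdP y‖ := by
  rcases eq_or_ne y 0 with rfl | hy
  · simp
  rcases eq_or_ne x 0 with rfl | hx
  · simp
  rcases le_total ‖NrdP x‖ ‖NrdP y‖ with h | h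
  · exact le_trans (norm_NrdP_add_aux hodd hram hy h) (le_max_right _ _)
  · rw [add_comm]
    exact le_trans (norm_NrdP_add_aux hodd hram hx h) (le_max_left _ _)

lemma coe_smul (c : ℤ_[p]) (u : ℍ[ℚ_[p],a,b]) : c • u = ((c : ℚ_[p])) • u := by
  rw [← PadicInt.algebraMap_apply, algebraMap_smul]

include hodd hram in
lemma norm_NrdP_span_le {S : Set ℍ[ℚ_[p],a,b]} {B : ℝ} (hB : 0 ≤ B)
    (hS : ∀ s ∈ S, ‖NrdP s‖ ≤ B) :
    ∀ z ∈ Submodule.span ℤ_[p] S, ‖NrdP z‖ ≤ B := by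
  intro z hz
  induction hz using Submodule.span_induction with
  | mem s hs => exact hS s hs
  | zero => simpa [NrdP_zero] using hB
  | add u v _ _ ihu ihv => exact le_trans (norm_NrdP_add hodd hram u v) (max_le ihu ihv)
  | smul c u _ ih =>
      rw [coe_smul, NrdP_smul, norm_mul, norm_mul]
      have hc : ‖(c : ℚ_[p])‖ ≤ 1 := c.2
      calc ‖(c:ℚ_[p])‖ * ‖(c:ℚ_[p])‖ * ‖NrdP u‖ ≤ 1 * 1 * ‖NrdP u‖ := by
            apply mul_le_mul_of_nonneg_right _ (norm_nonneg _)
            exact mul_le_mul hc hc (norm_nonneg _) zero_le_one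
        _ = ‖NrdP u‖ := by ring
        _ ≤ B := ih

include hodd hram in
lemma order_norm_le_one {O' : Submodule ℤ_[p] ℍ[ℚ_[p],a,b]} (hFG : O'.FG)
    (hmul : ∀ x ∈ O', ∀ y ∈ O', x * y ∈ O') :
    ∀ z ∈ O', ‖NrdP z‖ ≤ 1 := by
  obtain ⟨T, hT⟩ := hFG
  set B : NNReal := T.sup fun t => ‖NrdP t‖₊ with hBdef
  have hbound : ∀ z ∈ O', ‖NrdP z‖ ≤ B := by
    rw [← hT]
    apply norm_NrdP_span_le hodd hram B.2
    intro s hs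
    exact_mod_cast Finset.le_sup (f := fun t => ‖NrdP t‖₊) hs
  intro z hz
  by_contra hcon
  push_neg at hcon
  have hpow : ∀ n : ℕ, z^(n+1) ∈ O' := by
    intro n
    induction n with
    | zero => simpa using hz
    | succ m ih => rw [pow_succ]; exact hmul _ ih _ hz
  have hnorm : ∀ n : ℕ, ‖NrdP (z^(n+1))‖ = ‖NrdP z‖^(n+1) := by
    intro n
    induction n with
    | zero => simp
    | succ m ih => rw [pow_succ, NrdP_mul, norm_mul, ih]; ring
  obtain ⟨n, hn⟩ := pow_unbounded_of_one_lt (B : ℝ) hcon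
  have h1 : ‖NrdP z‖^n ≤ ‖NrdP z‖^(n+1) :=
    pow_le_pow_right₀ (le_of_lt hcon) (Nat.le_succ n)
  have h2 := hbound _ (hpow n)
  rw [hnorm n] at h2
  linarith

include hodd hram in
lemma mem_span_of_norm_NrdP_le_one
    {x : Fin 4 → ℍ[ℚ_[p],a,b]} (hLI : LinearIndependent ℤ_[p] x)
    (horth : ∀ i j, i ≠ j → TrdP (x i * star (x j)) = 0)
    (hub : ∀ i, ‖NrdP (x i)‖ ≤ 1) (hlb : ∀ i, (p:ℝ)⁻¹ ≤ ‖NrdP (x i)‖)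
    {z : ℍ[ℚ_[p],a,b]} (hz : ‖NrdP z‖ ≤ 1) :
    z ∈ Submodule.span ℤ_[p] (Set.range x) := by
  have hpinv : (0:ℝ) < (p:ℝ)⁻¹ := by
    have : (0:ℝ) < (p:ℝ) := by exact_mod_cast (Fact.out : p.Prime).pos
    positivity
  have hLIQ : LinearIndependent ℚ_[p] x :=
    (LinearIndependent.iff_fractionRing ℤ_[p] ℚ_[p]).mp hLI
  have hcard : Fintype.card (Fin 4) = Module.finrank ℚ_[p] ℍ[ℚ_[p],a,b] := by
    simp [QuaternionAlgebra.finrank_eq_four]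
  let Bs := basisOfLinearIndependentOfCardEqFinrank hLIQ hcard
  have hBs : ⇑Bs = x := coe_basisOfLinearIndependentOfCardEqFinrank _ _
  set c : Fin 4 → ℚ_[p] := fun i => Bs.repr z i with hc
  have hrepr : z = ∑ i, c i • x i := by
    conv_lhs => rw [← Bs.sum_repr z]
    simp [hBs, hc]
  have hTrd : ∀ j, TrdP (z * star (x j)) = c j * (2 * NrdP (x j)) := by
    intro j
    have e1 : z * star (x j) = ∑ i, c i • (x i * star (x j)) := by
      rw [hrepr, Finset.sum_mul]
      simp [smul_mul_assoc]
    calc TrdP (z * star (x j)) = TrdL (z * star (x j)) := rfl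
      _ = ∑ i, c i • TrdL (x i * star (x j)) := by rw [e1, map_sum]; simp
      _ = c j • TrdL (x j * star (x j)) := by
          apply Finset.sum_eq_single_of_mem j (Finset.mem_univ j)
          intro i _ hij
          rw [TrdL_apply, horth i j hij, smul_zero]
      _ = c j * (2 * NrdP (x j)) := by
          rw [TrdL_apply, mul_star_eq, smul_eq_mul]
          congr 1
          simp [TrdP_eq]
  have hcj : ∀ j, ‖c j‖ ≤ 1 := by
    intro j
    have hq0 : (0:ℝ) < ‖NrdP (x j)‖ := lt_of_lt_of_le hpinv (hlb j)
    have hT2 : ‖TrdP (z * star (x j))‖^2 ≤ ‖NrdP (x j)‖ := by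
      calc ‖TrdP (z * star (x j))‖^2 ≤ ‖NrdP (z * star (x j))‖ := key hodd hram _
        _ = ‖NrdP z‖ * ‖NrdP (x j)‖ := by rw [NrdP_mul, NrdP_star, norm_mul]
        _ ≤ 1 * ‖NrdP (x j)‖ := mul_le_mul_of_nonneg_right hz (norm_nonneg _)
        _ = ‖NrdP (x j)‖ := one_mul _
    have hTle : ‖TrdP (z * star (x j))‖ ≤ ‖NrdP (x j)‖ := by
      by_contra hcon
      push_neg at hcon
      have h1 : ‖TrdP (z * star (x j))‖ < 1 := by nlinarith
      have h2 := norm_le_inv_of_lt_one h1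
      linarith [hlb j]
    have hnormT : ‖TrdP (z * star (x j))‖ = ‖c j‖ * ‖NrdP (x j)‖ := by
      rw [hTrd j, norm_mul, norm_mul (2:ℚ_[p]), two_norm hodd, one_mul]
    rw [hnormT] at hTle
    exact le_of_mul_le_mul_right (by linarith) hq0
  rw [hrepr]
  apply Submodule.sum_mem
  intro j _
  set zc : ℤ_[p] := ⟨c j, hcj j⟩ with hzc
  have hmem : zc • x j ∈ Submodule.span ℤ_[p] (Set.range x) :=
    Submodule.smul_mem _ _ (Submodule.subset_span (Set.mem_range_self j))
  rwa [coe_smul zc (x j), show (zc : ℚ_[p]) = c j from rfl] at hmem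

end Division

end PSatAux

open PSatAux

/-- Let `p` be an odd prime and `B` a quaternion algebra over `ℚ`
ramified at `p` (i.e. `B ⊗ ℚ_p` is a division algebra). If `𝒪 ⊆ B` is a `ℤ`-order
which is `p`-saturated, then `𝒪` is `p`-maximal. -/
theorem pSaturated_implies_pMaximal {a b : ℚ} (ha : a ≠ 0) (hb : b ≠ 0)
    (p : ℕ) [Fact p.Prime] (hodd : p ≠ 2)
    (hram : ∀ x : ℍ[ℚ_[p], (a : ℚ_[p]), (b : ℚ_[p])], x ≠ 0 → IsUnit x)
    (O : Submodule ℤ ℍ[ℚ,a,b]) (hO : IsOrder O)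
    (hsat : IsPSaturated p O) :
    IsPMaximal p O := by
  classical
  obtain ⟨x, hspan, hLI, horth, hval⟩ := hsat
  have hloc_one : localize p (1 : ℍ[ℚ,a,b]) = 1 := by
    ext <;> simp [localize]
  have hloc_mul : ∀ u v : ℍ[ℚ,a,b], localize p (u*v) = localize p u * localize p v := by
    intro u v
    ext <;>
      simp only [localize, QuaternionAlgebra.re_mul, QuaternionAlgebra.imI_mul,
        QuaternionAlgebra.imJ_mul, QuaternionAlgebra.imK_mul] <;>
      push_cast <;> ring
  have h1mem : (1 : ℍ[ℚ_[p], (a : ℚ_[p]), (b : ℚ_[p])]) ∈ localOrder p O := by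
    rw [← hloc_one]
    exact Submodule.subset_span ⟨1, hO.2.1, rfl⟩
  have hmulO : ∀ u ∈ localOrder p O, ∀ v ∈ localOrder p O, u * v ∈ localOrder p O := by
    have hle : localOrder p O * localOrder p O ≤ localOrder p O := by
      rw [localOrder, Submodule.span_mul_span]
      apply Submodule.span_le.mpr
      rintro w hw
      rw [Set.mem_mul] at hw
      obtain ⟨s, hs, t, ht, rfl⟩ := hw
      obtain ⟨u, hu, rfl⟩ := hs
      obtain ⟨v, hv, rfl⟩ := ht
      exact Submodule.subset_span ⟨u*v, hO.2.2 u hu v hv, hloc_mul u v⟩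
    intro u hu v hv
    exact hle (Submodule.mul_mem_mul hu hv)
  have hFG : (localOrder p O).FG :=
    Submodule.fg_def.mpr ⟨Set.range x, Set.finite_range x, hspan⟩
  have hbound := order_norm_le_one hodd hram hFG hmulO
  have hximem : ∀ i, x i ∈ localOrder p O := by
    intro i
    rw [← hspan]
    exact Submodule.subset_span (Set.mem_range_self i)
  have hub : ∀ i, ‖NrdP (x i)‖ ≤ 1 := fun i => hbound _ (hximem i)
  have hxne : ∀ i, x i ≠ 0 := fun i => hLI.ne_zero i
  have hlb : ∀ i, (p:ℝ)⁻¹ ≤ ‖NrdP (x i)‖ := by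
    intro i
    have hN0 : NrdP (x i) ≠ 0 := NrdP_ne_zero hram (hxne i)
    rw [Padic.norm_eq_zpow_neg_valuation hN0]
    have hv1 := hval i
    have hp1 : (1:ℝ) ≤ (p:ℝ) := by exact_mod_cast (Fact.out : p.Prime).one_lt.le
    calc (p:ℝ)⁻¹ = (p:ℝ) ^ (-1 : ℤ) := by simp
      _ ≤ (p:ℝ) ^ (-(NrdP (x i)).valuation) := zpow_le_zpow_right₀ hp1 (by omega)
  have hmax : ∀ z : ℍ[ℚ_[p], (a : ℚ_[p]), (b : ℚ_[p])], ‖NrdP z‖ ≤ 1 →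
      z ∈ localOrder p O := by
    intro z hz
    rw [← hspan]
    exact mem_span_of_norm_NrdP_le_one hodd hram hLI horth hub hlb hz
  have hLIQ : LinearIndependent ℚ_[p] x :=
    (LinearIndependent.iff_fractionRing ℤ_[p] ℚ_[p]).mp hLI
  have hspanQ : Submodule.span ℚ_[p] ((localOrder p O : Set ℍ[ℚ_[p], (a : ℚ_[p]), (b : ℚ_[p])])) = ⊤ := by
    rw [eq_top_iff, ← hLIQ.span_eq_top_of_card_eq_finrank
      (by simp [QuaternionAlgebra.finrank_eq_four])]
    exact Submodule.span_mono (fun w hw => by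
      obtain ⟨i, rfl⟩ := hw
      exact hximem i)
  refine ⟨⟨⟨hFG, hspanQ⟩, h1mem, hmulO⟩, ?_⟩
  intro O' hO' hle
  apply le_antisymm _ hle
  intro z hz
  exact hmax z (order_norm_le_one hodd hram hO'.1.1 hO'.2.2 z hz)

end
end

section
/- Let B be a quaternion algebra over ℚ, let α₁, α₂, α₃ ∈ B, and set α₀ = 1. Define the trilinear form m(α₁,α₂,α₃) = Trd((α₁α₂ − α₂α₁)·ᾱ₃). Then m(α₁,α₂,α₃)² = det((Trd(α_i·ᾱ_j))_{0≤i,j≤3}), and m is alternating under permutations: m(α_{σ(1)}, α_{σ(2)}, α_{σ(3)}) = sgn(σ)·m(α₁,α₂,α₃) for every σ ∈ S₃. -/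
open Quaternion

noncomputable section

/-- The trilinear form `m(α₁,α₂,α₃) = Trd((α₁α₂ − α₂α₁)·ᾱ₃)`. -/
def triForm {a b : ℚ} (x y z : ℍ[ℚ,a,b]) : ℚ := Trd ((x * y - y * x) * star z)

set_option maxHeartbeats 4000000 in
private lemma detFour (A : Matrix (Fin 4) (Fin 4) ℚ) : A.det =
    A 0 0*A 1 1*A 2 2*A 3 3 - A 0 0*A 1 1*A 2 3*A 3 2 - A 0 0*A 1 2*A 2 1*A 3 3
    + A 0 0*A 1 2*A 2 3*A 3 1 + A 0 0*A 1 3*A 2 1*A 3 2 - A 0 0*A 1 3*A 2 2*A 3 1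
    - A 0 1*A 1 0*A 2 2*A 3 3 + A 0 1*A 1 0*A 2 3*A 3 2 + A 0 1*A 1 2*A 2 0*A 3 3
    - A 0 1*A 1 2*A 2 3*A 3 0 - A 0 1*A 1 3*A 2 0*A 3 2 + A 0 1*A 1 3*A 2 2*A 3 0
    + A 0 2*A 1 0*A 2 1*A 3 3 - A 0 2*A 1 0*A 2 3*A 3 1 - A 0 2*A 1 1*A 2 0*A 3 3
    + A 0 2*A 1 1*A 2 3*A 3 0 + A 0 2*A 1 3*A 2 0*A 3 1 - A 0 2*A 1 3*A 2 1*A 3 0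
    - A 0 3*A 1 0*A 2 1*A 3 2 + A 0 3*A 1 0*A 2 2*A 3 1 + A 0 3*A 1 1*A 2 0*A 3 2
    - A 0 3*A 1 1*A 2 2*A 3 0 - A 0 3*A 1 2*A 2 0*A 3 1 + A 0 3*A 1 2*A 2 1*A 3 0 := by
  have h1 : (Fin.succ 2 : Fin 4) = 3 := rfl
  have h2 : (((3 : Fin 4) : ℕ)) = 3 := rfl
  have h3 : (Fin.castSucc (2 : Fin 3) : Fin 4) = 2 := rfl
  rw [Matrix.det_succ_row_zero, Fin.sum_univ_four]
  simp [Matrix.det_fin_three, Matrix.submatrix_apply, Fin.succAbove, Fin.lt_def, h1, h2, h3]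
  norm_num
  ring

set_option maxHeartbeats 4000000 in
/-- For `α₀ = 1, α₁, α₂, α₃` in a quaternion algebra over `ℚ`, the
trilinear form `m(α₁,α₂,α₃) = Trd((α₁α₂ − α₂α₁)ᾱ₃)` satisfies
`m(α₁,α₂,α₃)² = det (Trd(αᵢ ᾱⱼ))_{0 ≤ i,j ≤ 3}`, and `m` is alternating under
permutations of its three arguments. -/
theorem triForm_sq_eq_gram_det_and_alternating {a b : ℚ} (ha : a ≠ 0) (hb : b ≠ 0)
    (α₁ α₂ α₃ : ℍ[ℚ,a,b]) :
    (triForm α₁ α₂ α₃) ^ 2 =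
      Matrix.det (Matrix.of fun i j : Fin 4 =>
        Trd ((![1, α₁, α₂, α₃] i) * star (![1, α₁, α₂, α₃] j))) ∧
    ∀ σ : Equiv.Perm (Fin 3),
      triForm (![α₁, α₂, α₃] (σ 0)) (![α₁, α₂, α₃] (σ 1)) (![α₁, α₂, α₃] (σ 2)) =
        ((Equiv.Perm.sign σ : ℤ) : ℚ) * triForm α₁ α₂ α₃ := by
  constructor
  · rw [detFour]
    simp [triForm, Trd, QuaternionAlgebra.re_mul]
    ring
  · have hσ : ∀ σ : Equiv.Perm (Fin 3), σ = 1 ∨ σ = Equiv.swap 0 1 ∨ σ = Equiv.swap 0 2 ∨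
        σ = Equiv.swap 1 2 ∨ σ = Equiv.swap 0 1 * Equiv.swap 1 2 ∨
        σ = Equiv.swap 0 2 * Equiv.swap 1 2 := by decide
    intro σ
    rcases hσ σ with h | h | h | h | h | h <;> subst h <;>
      simp only [Equiv.Perm.mul_apply, Equiv.swap_apply_def, Equiv.Perm.one_apply] <;>
      norm_num [Equiv.Perm.sign_swap, Fin.ext_iff] <;>
      simp [triForm, Trd, QuaternionAlgebra.re_mul] <;>
      ring
  
end
end
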